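/- Let A be a commutative ring, B and C two A-algebras. Then Ω_{(B ⊗_A C)/A} ≅ (Ω_{B/A} ⊗_B (B ⊗_A C)) ⊕ (Ω_{C/A} ⊗_C (B ⊗_A C)) as B ⊗_A C-modules. -/

import Mathlib

open scoped TensorProduct

attribute [local instance] Algebra.TensorProduct.rightAlgebra

open TensorProduct KaehlerDifferential

set_option maxHeartbeats 1000000
set_option synthInstance.maxHeartbeats 200000

section Aux

variable (A B C : Type*) [CommRing A] [CommRing B] [CommRing C]
  [Algebra A B] [Algebra A C]

instance kotp_smulCommClass_BC : SMulCommClass B C (B ⊗[A] C) :=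
  ⟨fun b c x => by simp only [Algebra.smul_def, mul_left_comm]⟩

instance kotp_smulCommClass_CB : SMulCommClass C B (B ⊗[A] C) :=
  SMulCommClass.symm _ _ _

lemma kotp_map_map_right (ω : Ω[C⁄A]) :
    map A B (B ⊗[A] C) (B ⊗[A] C) (map A A C (B ⊗[A] C) ω) =
      map A B C (B ⊗[A] C) ω := by
  have h : ω ∈ (⊤ : Submodule C (Ω[C⁄A])) := trivial
  rw [← span_range_derivation] at h
  induction h using Submodule.span_induction with
  | mem x hx => obtain ⟨c, rfl⟩ := hx; simp
  | zero => simp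
  | add x y _ _ hx hy => simp [hx, hy]
  | smul c x _ hx => rw [map_smul, LinearMap.map_smul_of_tower, hx, map_smul]

lemma kotp_map_map_left (ω : Ω[B⁄A]) :
    map A C (B ⊗[A] C) (B ⊗[A] C) (map A A B (B ⊗[A] C) ω) =
      map A C B (B ⊗[A] C) ω := by
  have h : ω ∈ (⊤ : Submodule B (Ω[B⁄A])) := trivial
  rw [← span_range_derivation] at h
  induction h using Submodule.span_induction with
  | mem x hx => obtain ⟨b, rfl⟩ := hx; simp
  | zero => simp
  | add x y _ _ hx hy => simp [hx, hy]
  | smul b x _ hx => rw [map_smul, LinearMap.map_smul_of_tower, hx, map_smul]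

/-- `B ⊗[A] C ≃ C ⊗[A] B` as `C`-modules (with the right algebra structure on the left). -/
noncomputable def kotpComm : (B ⊗[A] C) ≃ₗ[C] C ⊗[A] B :=
  AddEquiv.toLinearEquiv (Algebra.TensorProduct.comm A B C).toRingEquiv.toAddEquiv <| by
    intro c x
    show (Algebra.TensorProduct.comm A B C) (c • x) = c • (Algebra.TensorProduct.comm A B C) x
    rw [Algebra.smul_def, Algebra.smul_def, map_mul]
    congr 1

/-- The canonical additive equivalence `(B ⊗[A] C) ⊗[C] Ω[C/A] ≃ B ⊗[A] Ω[C/A]`. -/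
noncomputable def kotpEtaC : ((B ⊗[A] C) ⊗[C] Ω[C⁄A]) ≃+ B ⊗[A] Ω[C⁄A] :=
  (TensorProduct.comm C (B ⊗[A] C) (Ω[C⁄A])).toAddEquiv.trans <|
    (TensorProduct.congr (LinearEquiv.refl C (Ω[C⁄A])) (kotpComm A B C)).toAddEquiv.trans <|
      (AlgebraTensorModule.cancelBaseChange A C C (Ω[C⁄A]) B).toAddEquiv.trans
        (TensorProduct.comm A (Ω[C⁄A]) B).toAddEquiv

/-- The canonical additive equivalence `(B ⊗[A] C) ⊗[B] Ω[B/A] ≃ C ⊗[A] Ω[B/A]`. -/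
noncomputable def kotpEtaB : ((B ⊗[A] C) ⊗[B] Ω[B⁄A]) ≃+ C ⊗[A] Ω[B⁄A] :=
  (TensorProduct.comm B (B ⊗[A] C) (Ω[B⁄A])).toAddEquiv.trans <|
    (AlgebraTensorModule.cancelBaseChange A B B (Ω[B⁄A]) C).toAddEquiv.trans
      (TensorProduct.comm A (Ω[B⁄A]) C).toAddEquiv

lemma kotpEtaC_tmul (b : B) (c : C) (ω : Ω[C⁄A]) :
    kotpEtaC A B C ((b ⊗ₜ[A] c) ⊗ₜ[C] ω) = b ⊗ₜ[A] (c • ω) := by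
  have h : kotpComm A B C (b ⊗ₜ[A] c) = c ⊗ₜ[A] b := by
    show (Algebra.TensorProduct.comm A B C) (b ⊗ₜ[A] c) = c ⊗ₜ[A] b
    rw [Algebra.TensorProduct.comm_tmul]
  show (TensorProduct.comm A (Ω[C⁄A]) B)
      ((AlgebraTensorModule.cancelBaseChange A C C (Ω[C⁄A]) B)
        ((TensorProduct.congr (LinearEquiv.refl C (Ω[C⁄A])) (kotpComm A B C))
          ((TensorProduct.comm C (B ⊗[A] C) (Ω[C⁄A])) ((b ⊗ₜ[A] c) ⊗ₜ[C] ω)))) = _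
  rw [TensorProduct.comm_tmul, TensorProduct.congr_tmul, h, LinearEquiv.refl_apply,
    AlgebraTensorModule.cancelBaseChange_tmul, TensorProduct.comm_tmul]

lemma kotpEtaB_tmul (b : B) (c : C) (ω : Ω[B⁄A]) :
    kotpEtaB A B C ((b ⊗ₜ[A] c) ⊗ₜ[B] ω) = c ⊗ₜ[A] (b • ω) := by
  show (TensorProduct.comm A (Ω[B⁄A]) C)
      ((AlgebraTensorModule.cancelBaseChange A B B (Ω[B⁄A]) C)
        ((TensorProduct.comm B (B ⊗[A] C) (Ω[B⁄A])) ((b ⊗ₜ[A] c) ⊗ₜ[B] ω))) = _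
  rw [TensorProduct.comm_tmul, AlgebraTensorModule.cancelBaseChange_tmul,
    TensorProduct.comm_tmul]

lemma kotp_keyC (x : (B ⊗[A] C) ⊗[C] Ω[C⁄A]) :
    map A B (B ⊗[A] C) (B ⊗[A] C) (mapBaseChange A C (B ⊗[A] C) x) =
      tensorKaehlerEquivBase A B C (B ⊗[A] C) (kotpEtaC A B C x) := by
  induction x with
  | zero => simp
  | add x y hx hy => simp only [map_add, hx, hy]
  | tmul t ω =>
    induction t with
    | zero => simp [TensorProduct.zero_tmul]
    | add u v hu hv => rw [TensorProduct.add_tmul, map_add, map_add, map_add, map_add, hu, hv]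
    | tmul b c =>
      rw [kotpEtaC_tmul, mapBaseChange_tmul, LinearMap.map_smul, kotp_map_map_right,
        tensorKaehlerEquivBase_tmul, LinearMap.map_smul,
        ← algebraMap_smul (B ⊗[A] C) c (map A B C (B ⊗[A] C) ω),
        ← algebraMap_smul (B ⊗[A] C) b, smul_smul]
      congr 1
      show b ⊗ₜ[A] c = (b ⊗ₜ[A] (1 : C)) * ((1 : B) ⊗ₜ[A] c)
      rw [Algebra.TensorProduct.tmul_mul_tmul, mul_one, one_mul]

lemma kotp_keyB (x : (B ⊗[A] C) ⊗[B] Ω[B⁄A]) :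
    map A C (B ⊗[A] C) (B ⊗[A] C) (mapBaseChange A B (B ⊗[A] C) x) =
      tensorKaehlerEquivBase A C B (B ⊗[A] C) (kotpEtaB A B C x) := by
  induction x with
  | zero => simp
  | add x y hx hy => simp only [map_add, hx, hy]
  | tmul t ω =>
    induction t with
    | zero => simp [TensorProduct.zero_tmul]
    | add u v hu hv => rw [TensorProduct.add_tmul, map_add, map_add, map_add, map_add, hu, hv]
    | tmul b c =>
      rw [kotpEtaB_tmul, mapBaseChange_tmul, LinearMap.map_smul, kotp_map_map_left,
        tensorKaehlerEquivBase_tmul, LinearMap.map_smul,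
        ← algebraMap_smul (B ⊗[A] C) b (map A C B (B ⊗[A] C) ω),
        ← algebraMap_smul (B ⊗[A] C) c, smul_smul]
      congr 1
      show b ⊗ₜ[A] c = ((1 : B) ⊗ₜ[A] c) * (b ⊗ₜ[A] (1 : C))
      rw [Algebra.TensorProduct.tmul_mul_tmul, mul_one, one_mul]

end Aux

/-- Kähler differentials of a tensor product: as `B ⊗[A] C`-modules,
`Ω_{(B ⊗_A C)/A} ≅ (Ω_{B/A} ⊗_B (B ⊗_A C)) ⊕ (Ω_{C/A} ⊗_C (B ⊗_A C))`. -/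
theorem kaehler_of_tensor_product
    (A B C : Type*) [CommRing A] [CommRing B] [CommRing C]
    [Algebra A B] [Algebra A C] :
    Nonempty (KaehlerDifferential A (B ⊗[A] C) ≃ₗ[B ⊗[A] C]
      ((B ⊗[A] C) ⊗[B] KaehlerDifferential A B) ×
      ((B ⊗[A] C) ⊗[C] KaehlerDifferential A C)) := by
  set g : ((B ⊗[A] C) ⊗[B] Ω[B⁄A]) × ((B ⊗[A] C) ⊗[C] Ω[C⁄A]) →ₗ[B ⊗[A] C]
      Ω[B ⊗[A] C⁄A] :=
    (mapBaseChange A B (B ⊗[A] C)).coprod (mapBaseChange A C (B ⊗[A] C)) with hg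
  have hinj : Function.Injective g := by
    intro p q hpq
    have key : ∀ x y, g (x, y) = 0 → x = 0 ∧ y = 0 := by
      intro x y h
      simp only [hg, LinearMap.coprod_apply] at h
      have h2 : map A B (B ⊗[A] C) (B ⊗[A] C)
          (mapBaseChange A B (B ⊗[A] C) x + mapBaseChange A C (B ⊗[A] C) y) = 0 := by
        rw [h, map_zero]
      rw [map_add, (KaehlerDifferential.exact_mapBaseChange_map A B
        (B ⊗[A] C)).apply_apply_eq_zero x, zero_add, kotp_keyC] at h2
      have hy : y = 0 := by
        have := (tensorKaehlerEquivBase A B C (B ⊗[A] C)).injective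
          (h2.trans (map_zero _).symm)
        exact (kotpEtaC A B C).injective (this.trans (map_zero _).symm)
      subst hy
      rw [map_zero, add_zero] at h
      have hx : x = 0 := by
        have h3 := kotp_keyB A B C x
        rw [h, map_zero] at h3
        have := (tensorKaehlerEquivBase A C B (B ⊗[A] C)).injective
          (h3.symm.trans (map_zero _).symm)
        exact (kotpEtaB A B C).injective (this.trans (map_zero _).symm)
      exact ⟨hx, rfl⟩
    have := key (p.1 - q.1) (p.2 - q.2) (by
      have : g (p.1 - q.1, p.2 - q.2) = g p - g q := by
        rw [← map_sub]; rfl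
      rw [this, hpq, sub_self])
    have h1 := sub_eq_zero.mp this.1
    have h2 := sub_eq_zero.mp this.2
    exact Prod.ext h1 h2
  have hsurj : Function.Surjective g := by
    rw [← LinearMap.range_eq_top, eq_top_iff,
      ← KaehlerDifferential.span_range_derivation A (B ⊗[A] C), Submodule.span_le]
    rintro _ ⟨t, rfl⟩
    induction t with
    | zero => simp
    | add u v hu hv => rw [map_add]; exact add_mem hu hv
    | tmul b c =>
      have hbc : (b ⊗ₜ[A] c : B ⊗[A] C) = (b ⊗ₜ[A] (1 : C)) * ((1 : B) ⊗ₜ[A] c) := by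
        rw [Algebra.TensorProduct.tmul_mul_tmul, mul_one, one_mul]
      rw [hbc, Derivation.leibniz]
      refine add_mem (Submodule.smul_mem _ _ ?_) (Submodule.smul_mem _ _ ?_)
      · refine ⟨(0, (1 : B ⊗[A] C) ⊗ₜ KaehlerDifferential.D A C c), ?_⟩
        simp only [hg, LinearMap.coprod_apply, map_zero, zero_add, mapBaseChange_tmul, one_smul,
          map_D]
        rfl
      · refine ⟨((1 : B ⊗[A] C) ⊗ₜ KaehlerDifferential.D A B b, 0), ?_⟩
        simp only [hg, LinearMap.coprod_apply, map_zero, add_zero, mapBaseChange_tmul, one_smul,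
          map_D]
        rfl
  exact ⟨(LinearEquiv.ofBijective g ⟨hinj, hsurj⟩).symm⟩
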